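/- Let p and q be odd primes with p dividing q−1, and let G = ⟨x, y : x^p = y^q = 1, yx = xy^s⟩ with ord_q(s) = p. Then the sequence S = y^[q−1] · x · y^[q−1] · (x^{p−1} y^{s^{p−1}+1}) is a minimal product-one sequence: it cannot be written as the disjoint union of two nontrivial product-one subsequences. -/
import Mathlib

section Helpers

variable {G : Type*} [Group G] (x y : G) (s : ℕ)

lemma commY (hyx : y * x = x * y ^ s) : ∀ b : ℕ, y ^ b * x = x * y ^ (b * s) := by
  intro b
  induction b with
  | zero => simp
  | succ b ih =>
    calc y ^ (b + 1) * x = y ^ b * (y * x) := by rw [pow_succ, mul_assoc]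
      _ = (y ^ b * x) * y ^ s := by rw [hyx, mul_assoc]
      _ = x * (y ^ (b * s) * y ^ s) := by rw [ih, mul_assoc]
      _ = x * y ^ ((b + 1) * s) := by rw [← pow_add, Nat.succ_mul]

lemma commYX (hyx : y * x = x * y ^ s) : ∀ a b : ℕ, y ^ b * x ^ a = x ^ a * y ^ (b * s ^ a) := by
  intro a
  induction a with
  | zero => intro b; simp
  | succ a ih =>
    intro b
    calc y ^ b * x ^ (a + 1) = (y ^ b * x ^ a) * x := by rw [pow_succ, mul_assoc]
      _ = x ^ a * (y ^ (b * s ^ a) * x) := by rw [ih b, mul_assoc]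
      _ = x ^ a * (x * y ^ (b * s ^ a * s)) := by rw [commY x y s hyx]
      _ = x ^ (a + 1) * y ^ (b * s ^ (a + 1)) := by
          rw [show b * s ^ a * s = b * s ^ (a + 1) by rw [pow_succ]; ring, ← mul_assoc, ← pow_succ]

lemma normalMul (hyx : y * x = x * y ^ s) (a b c d : ℕ) :
    (x ^ a * y ^ b) * (x ^ c * y ^ d) = x ^ (a + c) * y ^ (b * s ^ c + d) := by
  calc (x ^ a * y ^ b) * (x ^ c * y ^ d) = x ^ a * ((y ^ b * x ^ c) * y ^ d) := by
        simp only [mul_assoc]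
    _ = x ^ a * (x ^ c * (y ^ (b * s ^ c) * y ^ d)) := by rw [commYX x y s hyx, mul_assoc]
    _ = x ^ (a + c) * y ^ (b * s ^ c + d) := by rw [← pow_add, ← mul_assoc, ← pow_add]

lemma prodRepOne (hyx : y * x = x * y ^ s) (i k c d : ℕ) :
    (List.replicate i y ++ (x ^ c * y ^ d) :: List.replicate k y).prod
      = x ^ c * y ^ (i * s ^ c + (d + k)) := by
  rw [List.prod_append, List.prod_cons, List.prod_replicate, List.prod_replicate]
  calc y ^ i * ((x ^ c * y ^ d) * y ^ k) = y ^ i * (x ^ c * y ^ (d + k)) := by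
        rw [mul_assoc, ← pow_add]
    _ = (y ^ i * x ^ c) * y ^ (d + k) := by rw [mul_assoc]
    _ = x ^ c * y ^ (i * s ^ c + (d + k)) := by rw [commYX x y s hyx, mul_assoc, ← pow_add]

lemma prodRepTwo (hyx : y * x = x * y ^ s) (i j k c d e f : ℕ) :
    (List.replicate i y ++ (x ^ c * y ^ d) ::
      (List.replicate j y ++ (x ^ e * y ^ f) :: List.replicate k y)).prod
      = x ^ (c + e) * y ^ (i * s ^ (c + e) + ((d + j) * s ^ e + (f + k))) := by
  rw [List.prod_append, List.prod_cons, List.prod_replicate,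
    prodRepOne x y s hyx j k e f]
  calc y ^ i * ((x ^ c * y ^ d) * (x ^ e * y ^ (j * s ^ e + (f + k))))
      = y ^ i * (x ^ (c + e) * y ^ (d * s ^ e + (j * s ^ e + (f + k)))) := by
        rw [normalMul x y s hyx]
    _ = (y ^ i * x ^ (c + e)) * y ^ (d * s ^ e + (j * s ^ e + (f + k))) := by rw [mul_assoc]
    _ = x ^ (c + e) * y ^ (i * s ^ (c + e) + ((d + j) * s ^ e + (f + k))) := by
        rw [commYX x y s hyx, mul_assoc, ← pow_add,
          show i * s ^ (c + e) + (d * s ^ e + (j * s ^ e + (f + k)))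
            = i * s ^ (c + e) + ((d + j) * s ^ e + (f + k)) by ring]

lemma cancelXY (p q : ℕ) (hox : orderOf x = p) (hoy : orderOf y = q)
    (hco : Nat.Coprime p q) (a b : ℕ) (h : x ^ a * y ^ b = 1) : p ∣ a ∧ q ∣ b := by
  have hxy : x ^ a = (y ^ b)⁻¹ := by
    rw [eq_inv_iff_mul_eq_one]; exact h
  have hx1 : (x ^ a) ^ p = 1 := by
    rw [← pow_mul, mul_comm, pow_mul, ← hox, pow_orderOf_eq_one, one_pow]
  have hx2 : (x ^ a) ^ q = 1 := by
    rw [hxy, inv_pow, ← pow_mul, mul_comm b q, pow_mul, ← hoy, pow_orderOf_eq_one, one_pow,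
      inv_one]
  have hd : orderOf (x ^ a) ∣ Nat.gcd p q :=
    Nat.dvd_gcd (orderOf_dvd_iff_pow_eq_one.2 hx1) (orderOf_dvd_iff_pow_eq_one.2 hx2)
  rw [hco.gcd_eq_one] at hd
  have hxa : x ^ a = 1 := orderOf_eq_one_iff.1 (Nat.dvd_one.1 hd)
  rw [hxa, one_mul] at h
  exact ⟨hox ▸ orderOf_dvd_iff_pow_eq_one.2 hxa, hoy ▸ orderOf_dvd_iff_pow_eq_one.2 h⟩

lemma prodAllEq (l : List G) (h : ∀ z ∈ l, z = y) : l.prod = y ^ l.length := by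
  conv_lhs => rw [List.eq_replicate_length.2 h]
  rw [List.prod_replicate]

lemma coeSplit1 (l₁ l₂ : List G) (a : G) :
    ((l₁ ++ a :: l₂ : List G) : Multiset G) = ↑l₁ + a ::ₘ ↑l₂ := by
  exact_mod_cast rfl

lemma coeSplit2 (m₁ m₂ l₂ : List G) (u v : G) :
    ((m₁ ++ u :: (m₂ ++ v :: l₂) : List G) : Multiset G) = ↑m₁ + u ::ₘ (↑m₂ + v ::ₘ ↑l₂) := by
  exact_mod_cast rfl

end Helpers

/-- A multiset `S` over a group `G` is *product-one* if its terms admit an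
ordering whose product is `1`. -/
def IsProductOne {G : Type*} [Group G] (S : Multiset G) : Prop :=
  ∃ l : List G, (l : Multiset G) = S ∧ l.prod = 1

/-- A multiset `S` is a *minimal product-one sequence* (an atom) if it is a
nontrivial product-one sequence which cannot be partitioned into two
nontrivial product-one sub-multisets. -/
def IsMinimalProductOne {G : Type*} [Group G] (S : Multiset G) : Prop :=
  S ≠ 0 ∧ IsProductOne S ∧
    ¬ ∃ T₁ T₂ : Multiset G, T₁ ≠ 0 ∧ T₂ ≠ 0 ∧ S = T₁ + T₂ ∧
      IsProductOne T₁ ∧ IsProductOne T₂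

/-- `prodSet S` is the set `π(S)` of all products of the terms of `S` over
all orderings. -/
def prodSet {G : Type*} [Group G] (S : Multiset G) : Set G :=
  {g | ∃ l : List G, (l : Multiset G) = S ∧ l.prod = g}

/-- `vcount K S` is the number of terms of `S` lying in the set `K`. -/
noncomputable def vcount {G : Type*} (K : Set G) (S : Multiset G) : ℕ :=
  letI := Classical.decPred fun g => g ∈ K
  Multiset.card (S.filter fun g => g ∈ K)

set_option maxHeartbeats 1000000 in
theorem stmt1 {G : Type*} [Group G] (p q s : ℕ) (hp : p.Prime) (hq : q.Prime)
    (hpodd : Odd p) (hqodd : Odd q) (hpq : p ∣ q - 1)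
    (x y : G) (hx : x ^ p = 1) (hy : y ^ q = 1) (hyx : y * x = x * y ^ s)
    (hs : orderOf ((s : ZMod q)) = p)
    (hgen : Subgroup.closure {x, y} = ⊤) (hcard : Nat.card G = p * q) :
    IsMinimalProductOne (Multiset.replicate (q - 1) y + {x} + Multiset.replicate (q - 1) y +
      {x ^ (p - 1) * y ^ (s ^ (p - 1) + 1)}) := by
  classical
  have hp2 := hp.two_le
  have hq2 := hq.two_le
  have hp3 : 3 ≤ p := by rcases hpodd with ⟨m, hm⟩; omega
  have hq3 : 3 ≤ q := by rcases hqodd with ⟨m, hm⟩; omega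
  have hpltq : p < q := by
    have := Nat.le_of_dvd (by omega) hpq; omega
  haveI : Fact q.Prime := ⟨hq⟩
  -- y is nontrivial, hence of order q
  have hy1 : y ≠ 1 := by
    intro h
    have hle : Subgroup.closure ({x, y} : Set G) ≤ Subgroup.zpowers x := by
      rw [Subgroup.closure_le]
      intro z hz
      rcases hz with rfl | hz
      · exact Subgroup.mem_zpowers z
      · rcases hz with rfl
        rw [h]; exact one_mem _
    rw [hgen] at hle
    have htop : Subgroup.zpowers x = ⊤ := le_antisymm le_top hle
    have h1 : orderOf x = p * q := by
      rw [← Nat.card_zpowers, htop, Subgroup.card_top, hcard]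
    have h2 : orderOf x ∣ p := orderOf_dvd_iff_pow_eq_one.2 hx
    rw [h1] at h2
    have := Nat.le_of_dvd (by omega) h2
    nlinarith
  have hoy : orderOf y = q := by
    have hd : orderOf y ∣ q := orderOf_dvd_iff_pow_eq_one.2 hy
    rcases hq.eq_one_or_self_of_dvd _ hd with h | h
    · exact absurd (orderOf_eq_one_iff.1 h) hy1
    · exact h
  have hx1 : x ≠ 1 := by
    intro h
    rw [h, mul_one, one_mul] at hyx
    have h1 : Nat.ModEq (orderOf y) 1 s := pow_eq_pow_iff_modEq.1 (by rw [pow_one, ← hyx])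
    rw [hoy] at h1
    have h2 : ((s : ZMod q)) = 1 := by
      have := (ZMod.natCast_eq_natCast_iff 1 s q).2 h1
      simpa using this.symm
    rw [h2, orderOf_one] at hs
    omega
  have hox : orderOf x = p := by
    have hd : orderOf x ∣ p := orderOf_dvd_iff_pow_eq_one.2 hx
    rcases hp.eq_one_or_self_of_dvd _ hd with h | h
    · exact absurd (orderOf_eq_one_iff.1 h) hx1
    · exact h
  have hco : Nat.Coprime p q := (Nat.coprime_primes hp hq).2 (by omega)
  have hcancel : ∀ a b : ℕ, x ^ a * y ^ b = 1 → p ∣ a ∧ q ∣ b :=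
    cancelXY x y p q hox hoy hco
  -- facts about s in ZMod q
  have hσp : ((s : ZMod q)) ^ p = 1 := by rw [← hs]; exact pow_orderOf_eq_one _
  have hτ1 : ((s : ZMod q)) ^ (p - 1) ≠ 1 := by
    intro h
    have := Nat.le_of_dvd (by omega) (hs ▸ orderOf_dvd_iff_pow_eq_one.2 h)
    omega
  have hσ1 : ((s : ZMod q)) ≠ 1 := by
    intro h
    rw [h, orderOf_one] at hs; omega
  have hττ : ((s : ZMod q)) ^ (p - 1) * ((s : ZMod q)) = 1 := by
    rw [← pow_succ, show p - 1 + 1 = p by omega]; exact hσp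
  have hq0 : ((q : ℕ) : ZMod q) = 0 := ZMod.natCast_self q
  set g : G := x ^ (p - 1) * y ^ (s ^ (p - 1) + 1) with hg
  -- distinctness of y, x, g
  have hxyne : x ≠ y := fun h => by rw [h, hoy] at hox; omega
  have hxg : x ≠ g := by
    intro h
    have h1 : x ^ (p - 1 + (p - 1)) * y ^ (s ^ (p - 1) + 1) = 1 := by
      calc x ^ (p - 1 + (p - 1)) * y ^ (s ^ (p - 1) + 1)
          = x ^ (p - 1) * g := by rw [hg, pow_add, mul_assoc]
        _ = x ^ (p - 1) * x := by rw [← h]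
        _ = 1 := by rw [← pow_succ, show p - 1 + 1 = p by omega, hx]
    have hdd := (hcancel _ _ h1).1
    have h3 : p ∣ 2 * p - 2 := by rw [show 2 * p - 2 = p - 1 + (p - 1) by omega]; exact hdd
    have h4 : p ∣ 2 * p - (2 * p - 2) := Nat.dvd_sub (dvd_mul_left p 2) h3
    rw [show 2 * p - (2 * p - 2) = 2 by omega] at h4
    have := Nat.le_of_dvd (by omega) h4
    omega
  have hyg : y ≠ g := by
    intro h
    have h1 : x ^ (p - 1) * y ^ (s ^ (p - 1) + 1 + (q - 1)) = 1 := by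
      calc x ^ (p - 1) * y ^ (s ^ (p - 1) + 1 + (q - 1))
          = g * y ^ (q - 1) := by rw [hg, pow_add, mul_assoc]
        _ = y * y ^ (q - 1) := by rw [← h]
        _ = 1 := by rw [← pow_succ', show q - 1 + 1 = q by omega, hy]
    have hdd := (hcancel _ _ h1).1
    have := Nat.le_of_dvd (by omega) hdd
    omega
  have hgx : g ≠ x := Ne.symm hxg
  have hgy : g ≠ y := Ne.symm hyg
  have hyx' : y ≠ x := Ne.symm hxyne
  set S : Multiset G := Multiset.replicate (q - 1) y + {x} + Multiset.replicate (q - 1) y +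
      {g} with hS
  -- membership and counts in S
  have hmemS : ∀ z ∈ S, z = y ∨ z = x ∨ z = g := by
    intro z hz
    rw [hS] at hz
    simp only [Multiset.mem_add, Multiset.mem_replicate, Multiset.mem_singleton] at hz
    tauto
  have hcxS : S.count x = 1 := by
    rw [hS]
    simp [Multiset.count_replicate, Multiset.count_singleton, hxyne, hxg, hyx', hgx]
  have hcgS : S.count g = 1 := by
    rw [hS]
    simp [Multiset.count_replicate, Multiset.count_singleton, hgy, hgx, hyg, hxg]
  have hcyS : S.count y = 2 * (q - 1) := by
    rw [hS]
    simp [Multiset.count_replicate, Multiset.count_singleton, hyx', hyg, hxyne, hgy]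
    omega
  -- the three impossible shapes
  have case10 : ∀ A : Multiset G, (∀ z ∈ A, z = y ∨ z = x ∨ z = g) →
      A.count x = 1 → A.count g = 0 → ¬ IsProductOne A := by
    rintro A hmem hcx hcg ⟨l, hl, hprod⟩
    have hxl : x ∈ l := by
      rw [← Multiset.mem_coe, hl]
      exact Multiset.count_pos.1 (by omega)
    obtain ⟨l₁, l₂, rfl⟩ := List.append_of_mem hxl
    have hA : A = ↑l₁ + x ::ₘ ↑l₂ := by rw [← hl, coeSplit1]
    rw [hA] at hcx hcg
    simp only [Multiset.count_add, Multiset.count_cons_self, Multiset.count_cons_of_ne hgx] at hcx hcg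
    have hx₁ : x ∉ l₁ := by rw [← Multiset.mem_coe, ← Multiset.count_eq_zero]; omega
    have hx₂ : x ∉ l₂ := by rw [← Multiset.mem_coe, ← Multiset.count_eq_zero]; omega
    have hg₁ : g ∉ l₁ := by rw [← Multiset.mem_coe, ← Multiset.count_eq_zero]; omega
    have hg₂ : g ∉ l₂ := by rw [← Multiset.mem_coe, ← Multiset.count_eq_zero]; omega
    have hy₁ : ∀ z ∈ l₁, z = y := by
      intro z hz
      rcases hmem z (by rw [hA]; exact Multiset.mem_add.2 (Or.inl (Multiset.mem_coe.2 hz))) with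
        h | h | h
      · exact h
      · exact absurd (h ▸ hz) hx₁
      · exact absurd (h ▸ hz) hg₁
    have hy₂ : ∀ z ∈ l₂, z = y := by
      intro z hz
      rcases hmem z (by
        rw [hA]
        exact Multiset.mem_add.2 (Or.inr (Multiset.mem_cons_of_mem (Multiset.mem_coe.2 hz)))) with
        h | h | h
      · exact h
      · exact absurd (h ▸ hz) hx₂
      · exact absurd (h ▸ hz) hg₂
    rw [List.eq_replicate_length.2 hy₁, List.eq_replicate_length.2 hy₂] at hprod
    have hpr := prodRepOne x y s hyx l₁.length l₂.length 1 0
    simp only [pow_one, pow_zero, mul_one, zero_add] at hpr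
    rw [hpr] at hprod
    have := (hcancel 1 _ (by rw [pow_one]; exact hprod)).1
    have := Nat.le_of_dvd (by omega) this
    omega
  have case01 : ∀ A : Multiset G, (∀ z ∈ A, z = y ∨ z = x ∨ z = g) →
      A.count x = 0 → A.count g = 1 → ¬ IsProductOne A := by
    rintro A hmem hcx hcg ⟨l, hl, hprod⟩
    have hgl : g ∈ l := by
      rw [← Multiset.mem_coe, hl]
      exact Multiset.count_pos.1 (by omega)
    obtain ⟨l₁, l₂, rfl⟩ := List.append_of_mem hgl
    have hA : A = ↑l₁ + g ::ₘ ↑l₂ := by rw [← hl, coeSplit1]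
    rw [hA] at hcx hcg
    simp only [Multiset.count_add, Multiset.count_cons_self, Multiset.count_cons_of_ne hxg] at hcx hcg
    have hx₁ : x ∉ l₁ := by rw [← Multiset.mem_coe, ← Multiset.count_eq_zero]; omega
    have hx₂ : x ∉ l₂ := by rw [← Multiset.mem_coe, ← Multiset.count_eq_zero]; omega
    have hg₁ : g ∉ l₁ := by rw [← Multiset.mem_coe, ← Multiset.count_eq_zero]; omega
    have hg₂ : g ∉ l₂ := by rw [← Multiset.mem_coe, ← Multiset.count_eq_zero]; omega
    have hy₁ : ∀ z ∈ l₁, z = y := by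
      intro z hz
      rcases hmem z (by rw [hA]; exact Multiset.mem_add.2 (Or.inl (Multiset.mem_coe.2 hz))) with
        h | h | h
      · exact h
      · exact absurd (h ▸ hz) hx₁
      · exact absurd (h ▸ hz) hg₁
    have hy₂ : ∀ z ∈ l₂, z = y := by
      intro z hz
      rcases hmem z (by
        rw [hA]
        exact Multiset.mem_add.2 (Or.inr (Multiset.mem_cons_of_mem (Multiset.mem_coe.2 hz)))) with
        h | h | h
      · exact h
      · exact absurd (h ▸ hz) hx₂
      · exact absurd (h ▸ hz) hg₂
    rw [List.eq_replicate_length.2 hy₁, List.eq_replicate_length.2 hy₂] at hprod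
    have hpr := prodRepOne x y s hyx l₁.length l₂.length (p - 1) (s ^ (p - 1) + 1)
    rw [← hg] at hpr
    rw [hpr] at hprod
    have := (hcancel (p - 1) _ hprod).1
    have := Nat.le_of_dvd (by omega) this
    omega
  -- the main case: one x, one g, q-2 copies of y has no product-one ordering
  have case11 : ∀ A : Multiset G, (∀ z ∈ A, z = y ∨ z = x ∨ z = g) →
      A.count x = 1 → A.count g = 1 → A.count y = q - 2 → ¬ IsProductOne A := by
    rintro A hmem hcx hcg hcy ⟨l, hl, hprod⟩
    have hxl : x ∈ l := by
      rw [← Multiset.mem_coe, hl]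
      exact Multiset.count_pos.1 (by omega)
    obtain ⟨l₁, l₂, rfl⟩ := List.append_of_mem hxl
    have hgl : g ∈ l₁ ∨ g ∈ l₂ := by
      have : g ∈ l₁ ++ x :: l₂ := by
        rw [← Multiset.mem_coe, hl]
        exact Multiset.count_pos.1 (by omega)
      rcases List.mem_append.1 this with h | h
      · exact Or.inl h
      · rcases List.mem_cons.1 h with h | h
        · exact absurd h.symm hxg
        · exact Or.inr h
    rcases hgl with hgl | hgl
    · -- g before x
      obtain ⟨m₁, m₂, rfl⟩ := List.append_of_mem hgl
      have hre : (m₁ ++ g :: m₂) ++ x :: l₂ = m₁ ++ g :: (m₂ ++ x :: l₂) := by simp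
      rw [hre] at hl hprod
      have hA : A = ↑m₁ + g ::ₘ (↑m₂ + x ::ₘ ↑l₂) := by rw [← hl, coeSplit2]
      rw [hA] at hcx hcg hcy
      simp only [Multiset.count_add, Multiset.count_cons_self, Multiset.count_cons_of_ne hxg,
        Multiset.count_cons_of_ne hgx, Multiset.count_cons_of_ne hyx',
        Multiset.count_cons_of_ne hyg] at hcx hcg hcy
      have hx₁ : x ∉ m₁ := by rw [← Multiset.mem_coe, ← Multiset.count_eq_zero]; omega
      have hx₂ : x ∉ m₂ := by rw [← Multiset.mem_coe, ← Multiset.count_eq_zero]; omega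
      have hx₃ : x ∉ l₂ := by rw [← Multiset.mem_coe, ← Multiset.count_eq_zero]; omega
      have hg₁ : g ∉ m₁ := by rw [← Multiset.mem_coe, ← Multiset.count_eq_zero]; omega
      have hg₂ : g ∉ m₂ := by rw [← Multiset.mem_coe, ← Multiset.count_eq_zero]; omega
      have hg₃ : g ∉ l₂ := by rw [← Multiset.mem_coe, ← Multiset.count_eq_zero]; omega
      have hmem' : ∀ z, (z ∈ m₁ ∨ z ∈ m₂ ∨ z ∈ l₂) → z = y := by
        intro z hz
        have hzA : z ∈ A := by
          rw [hA]
          rcases hz with h | h | h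
          · exact Multiset.mem_add.2 (Or.inl (Multiset.mem_coe.2 h))
          · exact Multiset.mem_add.2 (Or.inr (Multiset.mem_cons_of_mem
              (Multiset.mem_add.2 (Or.inl (Multiset.mem_coe.2 h)))))
          · exact Multiset.mem_add.2 (Or.inr (Multiset.mem_cons_of_mem
              (Multiset.mem_add.2 (Or.inr (Multiset.mem_cons_of_mem (Multiset.mem_coe.2 h))))))
        rcases hmem z hzA with h | h | h
        · exact h
        · subst h; tauto
        · subst h; tauto
      have hy₁ : ∀ z ∈ m₁, z = y := fun z hz => hmem' z (Or.inl hz)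
      have hy₂ : ∀ z ∈ m₂, z = y := fun z hz => hmem' z (Or.inr (Or.inl hz))
      have hy₃ : ∀ z ∈ l₂, z = y := fun z hz => hmem' z (Or.inr (Or.inr hz))
      -- length bookkeeping
      have hcy' : m₁.length + m₂.length + l₂.length = q - 2 := by
        have c1 : Multiset.count y (↑m₁ : Multiset G) = m₁.length := by
          conv_lhs => rw [List.eq_replicate_length.2 hy₁]
          simp [Multiset.count_replicate]
        have c2 : Multiset.count y (↑m₂ : Multiset G) = m₂.length := by
          conv_lhs => rw [List.eq_replicate_length.2 hy₂]
          simp [Multiset.count_replicate]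
        have c3 : Multiset.count y (↑l₂ : Multiset G) = l₂.length := by
          conv_lhs => rw [List.eq_replicate_length.2 hy₃]
          simp [Multiset.count_replicate]
        omega
      rw [List.eq_replicate_length.2 hy₁, List.eq_replicate_length.2 hy₂,
        List.eq_replicate_length.2 hy₃] at hprod
      have hpr := prodRepTwo x y s hyx m₁.length m₂.length l₂.length
        (p - 1) (s ^ (p - 1) + 1) 1 0
      simp only [pow_one, pow_zero, mul_one, zero_add] at hpr
      rw [← hg] at hpr
      rw [hpr] at hprod
      obtain ⟨-, hdvd⟩ := hcancel _ _ hprod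
      rw [show p - 1 + 1 = p by omega] at hdvd
      have h0 := (ZMod.natCast_eq_zero_iff _ q).2 hdvd
      push_cast at h0
      have hsum : ((m₁.length : ZMod q) + m₂.length + l₂.length) = -2 := by
        have h' : ((m₁.length + m₂.length + l₂.length : ℕ) : ZMod q)
            = ((q - 2 : ℕ) : ZMod q) := by rw [hcy']
        rw [Nat.cast_sub (by omega), ZMod.natCast_self] at h'
        push_cast at h'
        linear_combination h'
      have hkey : ((m₂.length : ZMod q) + 1) * ((s : ZMod q) - 1) = 0 := by
        linear_combination h0 - (m₁.length : ZMod q) * hσp - hττ - hsum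
      rcases mul_eq_zero.1 hkey with h | h
      · have h2 : ((m₂.length + 1 : ℕ) : ZMod q) = 0 := by push_cast; linear_combination h
        have := Nat.le_of_dvd (by omega) ((ZMod.natCast_eq_zero_iff _ q).1 h2)
        omega
      · exact hσ1 (by rwa [sub_eq_zero] at h)
    · -- x before g
      obtain ⟨m₁, m₂, rfl⟩ := List.append_of_mem hgl
      have hA : A = ↑l₁ + x ::ₘ (↑m₁ + g ::ₘ ↑m₂) := by rw [← hl, coeSplit2]
      rw [hA] at hcx hcg hcy
      simp only [Multiset.count_add, Multiset.count_cons_self, Multiset.count_cons_of_ne hxg,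
        Multiset.count_cons_of_ne hgx, Multiset.count_cons_of_ne hyx',
        Multiset.count_cons_of_ne hyg] at hcx hcg hcy
      have hx₁ : x ∉ l₁ := by rw [← Multiset.mem_coe, ← Multiset.count_eq_zero]; omega
      have hx₂ : x ∉ m₁ := by rw [← Multiset.mem_coe, ← Multiset.count_eq_zero]; omega
      have hx₃ : x ∉ m₂ := by rw [← Multiset.mem_coe, ← Multiset.count_eq_zero]; omega
      have hg₁ : g ∉ l₁ := by rw [← Multiset.mem_coe, ← Multiset.count_eq_zero]; omega
      have hg₂ : g ∉ m₁ := by rw [← Multiset.mem_coe, ← Multiset.count_eq_zero]; omega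
      have hg₃ : g ∉ m₂ := by rw [← Multiset.mem_coe, ← Multiset.count_eq_zero]; omega
      have hmem' : ∀ z, (z ∈ l₁ ∨ z ∈ m₁ ∨ z ∈ m₂) → z = y := by
        intro z hz
        have hzA : z ∈ A := by
          rw [hA]
          rcases hz with h | h | h
          · exact Multiset.mem_add.2 (Or.inl (Multiset.mem_coe.2 h))
          · exact Multiset.mem_add.2 (Or.inr (Multiset.mem_cons_of_mem
              (Multiset.mem_add.2 (Or.inl (Multiset.mem_coe.2 h)))))
          · exact Multiset.mem_add.2 (Or.inr (Multiset.mem_cons_of_mem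
              (Multiset.mem_add.2 (Or.inr (Multiset.mem_cons_of_mem (Multiset.mem_coe.2 h))))))
        rcases hmem z hzA with h | h | h
        · exact h
        · subst h; tauto
        · subst h; tauto
      have hy₁ : ∀ z ∈ l₁, z = y := fun z hz => hmem' z (Or.inl hz)
      have hy₂ : ∀ z ∈ m₁, z = y := fun z hz => hmem' z (Or.inr (Or.inl hz))
      have hy₃ : ∀ z ∈ m₂, z = y := fun z hz => hmem' z (Or.inr (Or.inr hz))
      have hcy' : l₁.length + m₁.length + m₂.length = q - 2 := by
        have c1 : Multiset.count y (↑l₁ : Multiset G) = l₁.length := by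
          conv_lhs => rw [List.eq_replicate_length.2 hy₁]
          simp [Multiset.count_replicate]
        have c2 : Multiset.count y (↑m₁ : Multiset G) = m₁.length := by
          conv_lhs => rw [List.eq_replicate_length.2 hy₂]
          simp [Multiset.count_replicate]
        have c3 : Multiset.count y (↑m₂ : Multiset G) = m₂.length := by
          conv_lhs => rw [List.eq_replicate_length.2 hy₃]
          simp [Multiset.count_replicate]
        omega
      rw [List.eq_replicate_length.2 hy₁, List.eq_replicate_length.2 hy₂,
        List.eq_replicate_length.2 hy₃] at hprod
      have hpr := prodRepTwo x y s hyx l₁.length m₁.length m₂.length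
        1 0 (p - 1) (s ^ (p - 1) + 1)
      simp only [pow_one, pow_zero, mul_one, zero_add] at hpr
      rw [← hg] at hpr
      rw [hpr] at hprod
      obtain ⟨-, hdvd⟩ := hcancel _ _ hprod
      rw [show 1 + (p - 1) = p by omega] at hdvd
      have h0 := (ZMod.natCast_eq_zero_iff _ q).2 hdvd
      push_cast at h0
      have hsum : ((l₁.length : ZMod q) + m₁.length + m₂.length) = -2 := by
        have h' : ((l₁.length + m₁.length + m₂.length : ℕ) : ZMod q)
            = ((q - 2 : ℕ) : ZMod q) := by rw [hcy']
        rw [Nat.cast_sub (by omega), ZMod.natCast_self] at h'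
        push_cast at h'
        linear_combination h'
      have hkey : ((m₁.length : ZMod q) + 1) * ((s : ZMod q) ^ (p - 1) - 1) = 0 := by
        linear_combination h0 - (l₁.length : ZMod q) * hσp - hsum
      rcases mul_eq_zero.1 hkey with h | h
      · have h2 : ((m₁.length + 1 : ℕ) : ZMod q) = 0 := by push_cast; linear_combination h
        have := Nat.le_of_dvd (by omega) ((ZMod.natCast_eq_zero_iff _ q).1 h2)
        omega
      · exact hτ1 (by rwa [sub_eq_zero] at h)
  -- an all-y nontrivial product-one piece must have exactly q terms
  have allY : ∀ B : Multiset G, (∀ z ∈ B, z = y ∨ z = x ∨ z = g) → B ≠ 0 →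
      B.count x = 0 → B.count g = 0 → B.count y ≤ 2 * (q - 1) → IsProductOne B →
      B.count y = q := by
    rintro B hmem hB0 hcx hcg hle ⟨l, hl, hprod⟩
    have hally : ∀ z ∈ B, z = y := by
      intro z hz
      rcases hmem z hz with h | h | h
      · exact h
      · subst h; exact absurd (Multiset.count_pos.2 hz) (by omega)
      · subst h; exact absurd (Multiset.count_pos.2 hz) (by omega)
    have hlall : ∀ z ∈ l, z = y := fun z hz => hally z (by rw [← hl]; exact Multiset.mem_coe.2 hz)
    have hlen : l.length = Multiset.card B := by rw [← hl]; simp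
    have hone : y ^ Multiset.card B = 1 := by
      rw [← hlen, ← prodAllEq y l hlall]; exact hprod
    have hq1 : q ∣ Multiset.card B := hoy ▸ orderOf_dvd_iff_pow_eq_one.2 hone
    have hcount : B.count y = Multiset.card B := by
      conv_lhs => rw [Multiset.eq_replicate_card.2 hally]
      simp [Multiset.count_replicate]
    have hpos : 0 < Multiset.card B := Multiset.card_pos.2 hB0
    obtain ⟨c, hc⟩ := hq1
    rcases c with _ | _ | c
    · omega
    · omega
    · exfalso
      have h2q : 2 * q ≤ Multiset.card B := by
        rw [hc]
        calc 2 * q = q * 2 := by ring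
          _ ≤ q * (c + 1 + 1) := Nat.mul_le_mul_left q (by omega)
      omega
  -- assemble
  refine ⟨?_, ?_, ?_⟩
  · intro h0
    rw [h0] at hcgS
    simp at hcgS
  · refine ⟨List.replicate (q - 1) y ++ (x ^ 1 * y ^ 0) ::
      (List.replicate (q - 1) y ++ (x ^ (p - 1) * y ^ (s ^ (p - 1) + 1)) ::
        List.replicate 0 y), ?_, ?_⟩
    · rw [coeSplit2, hS]
      simp only [pow_one, pow_zero, mul_one, List.replicate_zero, Multiset.coe_nil,
        Multiset.coe_replicate, ← hg, ← Multiset.singleton_add, add_zero]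
      abel
    · rw [prodRepTwo x y s hyx (q - 1) (q - 1) 0 1 0 (p - 1) (s ^ (p - 1) + 1),
        show 1 + (p - 1) = p by omega, hx, one_mul]
      refine orderOf_dvd_iff_pow_eq_one.1 ?_
      rw [hoy]
      refine (ZMod.natCast_eq_zero_iff _ q).1 ?_
      push_cast [Nat.cast_sub (show 1 ≤ q by omega)]
      rw [ZMod.natCast_self]
      linear_combination -hσp
  · rintro ⟨T₁, T₂, h1, h2, heq, hP1, hP2⟩
    have hcxT : T₁.count x + T₂.count x = 1 := by
      rw [← Multiset.count_add, ← heq, hcxS]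
    have hcgT : T₁.count g + T₂.count g = 1 := by
      rw [← Multiset.count_add, ← heq, hcgS]
    have hcyT : T₁.count y + T₂.count y = 2 * (q - 1) := by
      rw [← Multiset.count_add, ← heq, hcyS]
    have hmem1 : ∀ z ∈ T₁, z = y ∨ z = x ∨ z = g := fun z hz =>
      hmemS z (heq ▸ Multiset.mem_add.2 (Or.inl hz))
    have hmem2 : ∀ z ∈ T₂, z = y ∨ z = x ∨ z = g := fun z hz =>
      hmemS z (heq ▸ Multiset.mem_add.2 (Or.inr hz))
    rcases Nat.lt_or_ge (T₁.count x) 1 with hx1c | hx1c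
    · -- x is in T₂
      rcases Nat.lt_or_ge (T₁.count g) 1 with hg1c | hg1c
      · -- both in T₂, T₁ is all y's
        have := allY T₁ hmem1 h1 (by omega) (by omega) (by omega) hP1
        exact case11 T₂ hmem2 (by omega) (by omega) (by omega) hP2
      · exact case01 T₁ hmem1 (by omega) (by omega) hP1
    · rcases Nat.lt_or_ge (T₁.count g) 1 with hg1c | hg1c
      · exact case10 T₁ hmem1 (by omega) (by omega) hP1
      · -- both in T₁, T₂ is all y's
        have := allY T₂ hmem2 h2 (by omega) (by omega) (by omega) hP2
        exact case11 T₁ hmem1 (by omega) (by omega) (by omega) hP1
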